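/- There exists a constant C, depending only on the polynomials W_{i,v} (1 ≤ i ≤ K, 1 ≤ v ≤ k), such that for every k-admissible positive integer q and every positive integer n with gcd(f(n), q) = 1, the k-free part of n is at most C. -/

import Mathlib

open Polynomial
open scoped Classical

noncomputable section

/-- `f : ℕ → ℤ` is a multiplicative arithmetic function. -/
def IsMultFn (f : ℕ → ℤ) : Prop :=
  f 1 = 1 ∧ ∀ m n : ℕ, Nat.Coprime m n → f (m * n) = f m * f n

/-- The polynomials `F i` are multiplicatively independent over `ℤ`:
no nonzero integer tuple `c` makes `∏ i, (F i) ^ (c i)` identically constant in `ℚ(T)`. -/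
def MultIndep {m : ℕ} (F : Fin m → Polynomial ℤ) : Prop :=
  ¬ ∃ c : Fin m → ℤ, c ≠ 0 ∧ ∃ r : ℚ,
      (∏ i, (algebraMap (Polynomial ℚ) (RatFunc ℚ) ((F i).map (Int.castRingHom ℚ))) ^ (c i))
        = algebraMap ℚ (RatFunc ℚ) r

/-- `β` is the last invariant factor of the exponent matrix of the family `F`
(for some factorization of the `F i` into pairwise non-associated primitive irreducibles,
via a Smith normal form of the exponent matrix). -/
def IsLastInvFactor {m : ℕ} (F : Fin m → Polynomial ℤ) (β : ℤ) : Prop :=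
  ∃ (M : ℕ) (G : Fin M → Polynomial ℤ) (c : Fin m → ℤ) (μ : Fin M → Fin m → ℕ),
    (∀ j, Irreducible (G j)) ∧
    (∀ j, (G j).IsPrimitive) ∧
    (∀ j j', j ≠ j' → ¬ Associated (G j) (G j')) ∧
    (∀ i, F i = Polynomial.C (c i) * ∏ j, G j ^ μ j i) ∧
    (∀ j, ∃ i, 0 < μ j i) ∧
    ∃ (P : Matrix (Fin M) (Fin M) ℤ) (Q : Matrix (Fin m) (Fin m) ℤ),
      IsUnit P.det ∧ IsUnit Q.det ∧
      (∀ (s : Fin M) (t : Fin m), (s : ℕ) ≠ (t : ℕ) →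
        (P * (Matrix.of fun u v => (μ u v : ℤ)) * Q) s t = 0) ∧
      (∀ (s s' : Fin M) (t t' : Fin m), (s : ℕ) = (t : ℕ) → (s' : ℕ) = (t' : ℕ) →
        (s : ℕ) + 1 = (s' : ℕ) →
        (P * (Matrix.of fun u v => (μ u v : ℤ)) * Q) s t ∣
          (P * (Matrix.of fun u v => (μ u v : ℤ)) * Q) s' t') ∧
      (∀ (s : Fin M) (t : Fin m), (s : ℕ) = (t : ℕ) → (s : ℕ) + 1 = min M m →
        β = (P * (Matrix.of fun u v => (μ u v : ℤ)) * Q) s t)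

/-- Invariant Factor Hypothesis `IFH(F; B₀)` for the modulus `q`. -/
def IFH {m : ℕ} (F : Fin m → Polynomial ℤ) (B₀ : ℝ) (q : ℕ) : Prop :=
  ∀ β : ℤ, IsLastInvFactor F β →
    ∀ ℓ : ℕ, ℓ.Prime → ℓ ∣ q → B₀ < (ℓ : ℝ) → Int.gcd ((ℓ : ℤ) - 1) β = 1

/-- `alphaRatio q P`: the proportion of units `u` mod `q` with `P(u)` a unit mod `q`. -/
def alphaRatio (q : ℕ) (P : Polynomial ℤ) : ℝ :=
  (Nat.card {u : (ZMod q)ˣ // IsUnit (Polynomial.aeval ((u : ZMod q)) P)} : ℝ)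
    / (Nat.totient q : ℝ)

/-- `q` is `k`-admissible with respect to the family of products `Wprod v`. -/
def KAdmissible (Wprod : ℕ → Polynomial ℤ) (k q : ℕ) : Prop :=
  (∃ u : (ZMod q)ˣ, IsUnit (Polynomial.aeval ((u : ZMod q)) (Wprod k))) ∧
  ∀ v, 1 ≤ v → v < k → ¬ ∃ u : (ZMod q)ˣ, IsUnit (Polynomial.aeval ((u : ZMod q)) (Wprod v))

/-- Narkiewicz's set `Q(k; f_1, …, f_K)`. -/
def NarkSet {K : ℕ} (k : ℕ) (f : Fin K → ℕ → ℤ) (W : Fin K → ℕ → Polynomial ℤ) : Set ℕ :=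
  {q | KAdmissible (fun v => ∏ i, W i v) k q ∧
    ∀ χ : Fin K → DirichletCharacter ℂ q, χ ≠ (fun _ => 1) →
      (∀ u : (ZMod q)ˣ, IsUnit (Polynomial.aeval ((u : ZMod q)) (∏ i, W i k)) →
          (∏ i, (χ i) (Polynomial.aeval ((u : ZMod q)) (W i k))) = 1) →
      ∃ p : ℕ, p.Prime ∧
        (∑' j : ℕ, (∏ i, (χ i) ((f i (p ^ j) : ZMod q))) *
            ((((p : ℝ) ^ (-(j : ℝ) / (k : ℝ))) : ℝ) : ℂ)) = 0}

/-- `Pj j n`: the `j`-th largest prime factor of `n` counted with multiplicity,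
equal to `1` if `Ω(n) < j`. -/
def Pj (j n : ℕ) : ℕ := (n.primeFactorsList.reverse).getD (j - 1) 1

/-- `nPart k n` is `n_k`, the largest positive integer whose `k`-th power is a
unitary divisor of `n`. -/
def nPart (k n : ℕ) : ℕ :=
  ∏ p ∈ n.primeFactors, if k ∣ n.factorization p then p ^ (n.factorization p / k) else 1

/-- A polynomial is squarefull in `ℤ[T]` iff every complex root has multiplicity at least 2. -/
def SquarefullPoly (F : Polynomial ℤ) : Prop :=
  ∀ z : ℂ, (F.map (Int.castRingHom ℂ)).IsRoot z →
    2 ≤ (F.map (Int.castRingHom ℂ)).rootMultiplicity z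

/-- `n` is convenient (with respect to exponent `k`, threshold `y` and length `J`). -/
def Convenient (k : ℕ) (y : ℝ) (J : ℕ) (n : ℕ) : Prop :=
  ∃ (m : ℕ) (P : Fin J → ℕ), 0 < m ∧ (∀ t, (P t).Prime) ∧
    (∀ s t : Fin J, s < t → P t < P s) ∧
    (∀ t, y < (P t : ℝ) ∧ Pj 1 m < P t) ∧
    n = m * (∏ t, P t) ^ k

/-- The solution count `Ṽ_{N,K}(q; (w_i))`. -/
def VNK {K N : ℕ} (F : Fin K → Fin N → Polynomial ℤ) (q : ℕ) (w : Fin K → ZMod q) : ℕ :=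
  Nat.card {v : Fin N → (ZMod q)ˣ //
    ∀ i, (∏ j, Polynomial.aeval ((v j : ZMod q)) (F i j)) = w i}

/-- `α*_N(q) = ∏_j α̃_j(q)`. -/
def alphaStarN {K N : ℕ} (F : Fin K → Fin N → Polynomial ℤ) (q : ℕ) : ℝ :=
  ∏ j, alphaRatio q (∏ i, F i j)

/-- `n` is `r`-full: every prime dividing `n` divides it to the `r`-th power. -/
def IsRFull (r n : ℕ) : Prop := ∀ p : ℕ, p.Prime → p ∣ n → p ^ r ∣ n

/-- The `k`-free part of `n`. -/
def kfreePart (k n : ℕ) : ℕ :=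
  ∏ p ∈ n.primeFactors, if n.factorization p < k then p ^ n.factorization p else 1


private lemma aux_isUnit {q : ℕ} {a : ℤ} (h : IsCoprime a (q : ℤ)) :
    IsUnit ((a : ZMod q)) := by
  obtain ⟨s, t, hst⟩ := h
  refine IsUnit.of_mul_eq_one ((s : ZMod q)) ?_
  have h1 : ((s * a + t * q : ℤ) : ZMod q) = ((1 : ℤ) : ZMod q) := by rw [hst]
  push_cast at h1
  rw [ZMod.natCast_self, mul_zero, add_zero] at h1
  rw [mul_comm]; exact h1

private lemma aux_eval (q : ℕ) (P : Polynomial ℤ) (x : ℤ) :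
    Polynomial.aeval ((x : ZMod q)) P = ((P.eval x : ℤ) : ZMod q) := by
  rw [Polynomial.aeval_def, algebraMap_int_eq,
    show ((x : ZMod q)) = (Int.castRingHom (ZMod q)) x from rfl, Polynomial.eval₂_at_apply]
  rfl

private lemma exists_good (P : Polynomial ℤ) (hP : P ≠ 0) (p : ℕ) (hp : p.Prime)
    (hgt : P.natDegree + P.leadingCoeff.natAbs + 1 < p) :
    ∃ c : ℕ, ¬ (p : ℤ) ∣ (c : ℤ) ∧ ¬ (p : ℤ) ∣ P.eval (c : ℤ) := by
  haveI : Fact p.Prime := ⟨hp⟩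
  have hlc0 : P.leadingCoeff ≠ 0 := Polynomial.leadingCoeff_ne_zero.mpr hP
  have hlc : ((P.leadingCoeff : ℤ) : ZMod p) ≠ 0 := by
    rw [Ne, ZMod.intCast_zmod_eq_zero_iff_dvd]
    intro hdvd
    have h1 : (p : ℤ) ∣ (P.leadingCoeff.natAbs : ℤ) := Int.dvd_natAbs.mpr hdvd
    have h2 : (p : ℤ) ≤ (P.leadingCoeff.natAbs : ℤ) :=
      Int.le_of_dvd (by exact_mod_cast Int.natAbs_pos.mpr hlc0) h1
    have h3 : p ≤ P.leadingCoeff.natAbs := by exact_mod_cast h2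
    omega
  set Pb := P.map (Int.castRingHom (ZMod p)) with hPbdef
  have hdeg : Pb.natDegree = P.natDegree :=
    Polynomial.natDegree_map_of_leadingCoeff_ne_zero _ hlc
  have hPb0 : Pb ≠ 0 := by
    intro h
    apply hlc
    have h0 : Pb.coeff P.natDegree = 0 := by rw [h]; simp
    rwa [Polynomial.coeff_map, Polynomial.coeff_natDegree] at h0
  have hexz : ∃ z : ZMod p, z ≠ 0 ∧ Pb.eval z ≠ 0 := by
    by_contra h
    push_neg at h
    have hsub : Finset.univ.erase (0 : ZMod p) ⊆ Pb.roots.toFinset := by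
      intro z hz
      rw [Multiset.mem_toFinset, Polynomial.mem_roots']
      exact ⟨hPb0, h z (Finset.ne_of_mem_erase hz)⟩
    have h1 : p - 1 ≤ Pb.roots.toFinset.card := by
      have h2 := Finset.card_le_card hsub
      rwa [Finset.card_erase_of_mem (Finset.mem_univ _), Finset.card_univ, ZMod.card] at h2
    have h2 : Pb.roots.toFinset.card ≤ P.natDegree :=
      le_trans (Multiset.toFinset_card_le _) (le_trans (Polynomial.card_roots' _) hdeg.le)
    omega
  obtain ⟨z, hz0, hzev⟩ := hexz
  have hzv : ((z.val : ℕ) : ZMod p) = z := ZMod.natCast_rightInverse z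
  refine ⟨z.val, ?_, ?_⟩
  · rw [Int.natCast_dvd_natCast]
    intro hdvd
    apply hz0
    rw [← hzv, ZMod.natCast_eq_zero_iff]
    exact hdvd
  · intro hdvd
    apply hzev
    have h1 : ((P.eval ((z.val : ℕ) : ℤ) : ℤ) : ZMod p) = 0 :=
      (ZMod.intCast_zmod_eq_zero_iff_dvd _ _).mpr hdvd
    rw [← aux_eval] at h1
    have h2 : (((z.val : ℕ) : ℤ) : ZMod p) = z := by push_cast; exact hzv
    rw [h2] at h1
    rwa [hPbdef, Polynomial.eval_map, ← algebraMap_int_eq, ← Polynomial.aeval_def]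

private lemma crt_unit (q : ℕ) (hq : q ≠ 0) (P : Polynomial ℤ) (hP : P ≠ 0) (p : ℕ)
    (hp : p.Prime) (hgt : P.natDegree + P.leadingCoeff.natAbs + 1 < p)
    (hcop : IsCoprime (P.eval (p : ℤ)) (q : ℤ)) :
    ∃ u : (ZMod q)ˣ, IsUnit (Polynomial.aeval ((u : ZMod q)) P) := by
  by_cases hpq : p ∣ q
  · have hppr : Prime ((p : ℕ) : ℤ) := Nat.prime_iff_prime_int.mp hp
    set a := q.factorization p with ha
    have ha1 : 0 < a := hp.factorization_pos_of_dvd hq hpq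
    set q' := ordCompl[p] q with hq'def
    have hqeq : p ^ a * q' = q := Nat.ordProj_mul_ordCompl_eq_self q p
    have hcpq' : Nat.Coprime p q' := Nat.coprime_ordCompl hp hq
    have hcpow : Nat.Coprime (p ^ a) q' := hcpq'.pow_left _
    obtain ⟨c, hc1, hc2⟩ := exists_good P hP p hp hgt
    obtain ⟨x, hx1, hx2⟩ := Nat.chineseRemainder hcpow c p
    have hxcp : x ≡ c [MOD p] := hx1.of_dvd (dvd_pow_self p ha1.ne')
    have hxp : ¬ p ∣ x := by
      intro h
      apply hc1
      rw [Int.natCast_dvd_natCast]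
      have h0 : x ≡ 0 [MOD p] := (Nat.modEq_zero_iff_dvd).mpr h
      exact (Nat.modEq_zero_iff_dvd).mp (hxcp.symm.trans h0)
    have hxq : Nat.Coprime x q := by
      rw [← hqeq]
      refine Nat.Coprime.mul_right ?_ ?_
      · exact Nat.Coprime.pow_right _ ((Nat.Prime.coprime_iff_not_dvd hp).mpr hxp).symm
      · have hipq : (x : ℤ) ≡ (p : ℤ) [ZMOD (q' : ℤ)] := Int.natCast_modEq_iff.mpr hx2
        have := Nat.isCoprime_iff_coprime.mpr hcpq'
        obtain ⟨t, ht⟩ := Int.modEq_iff_add_fac.mp hipq.symm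
        rw [← Nat.isCoprime_iff_coprime, ht]
        exact this.add_mul_left_left t
    -- coprimality of the evaluation
    have hevx : IsCoprime (P.eval ((x : ℕ) : ℤ)) (q : ℤ) := by
      have hqc : ((q : ℕ) : ℤ) = ((p : ℤ)) ^ a * ((q' : ℕ) : ℤ) := by
        rw [← hqeq]; push_cast; ring
      rw [hqc]
      refine IsCoprime.mul_right ?_ ?_
      · refine IsCoprime.pow_right ?_
        have hnd : ¬ (p : ℤ) ∣ P.eval ((x : ℕ) : ℤ) := by
          intro hdvd
          apply hc2
          have h1 : ((P.eval ((x : ℕ) : ℤ) : ℤ) : ZMod p) = 0 :=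
            (ZMod.intCast_zmod_eq_zero_iff_dvd _ _).mpr hdvd
          rw [← aux_eval] at h1
          have hxc : (((x : ℕ) : ℤ) : ZMod p) = (((c : ℕ) : ℤ) : ZMod p) := by
            push_cast
            rw [ZMod.natCast_eq_natCast_iff]
            exact hxcp
          rw [hxc, aux_eval] at h1
          exact (ZMod.intCast_zmod_eq_zero_iff_dvd _ _).mp h1
        exact ((hppr.coprime_iff_not_dvd).mpr hnd).symm
      · have hdvd' : ((q' : ℕ) : ℤ) ∣ ((q : ℕ) : ℤ) :=
          Int.natCast_dvd_natCast.mpr (Nat.ordCompl_dvd q p)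
        have hcq' : IsCoprime (P.eval (p : ℤ)) ((q' : ℕ) : ℤ) :=
          hcop.of_isCoprime_of_dvd_right hdvd'
        have hxeq : ((x : ℕ) : ZMod q') = ((p : ℕ) : ZMod q') :=
          (ZMod.natCast_eq_natCast_iff _ _ _).mpr hx2
        have e1 : ((P.eval ((x : ℕ) : ℤ) : ℤ) : ZMod q') = ((P.eval ((p : ℕ) : ℤ) : ℤ) : ZMod q') := by
          rw [← aux_eval, ← aux_eval, Int.cast_natCast, Int.cast_natCast, hxeq]
        have hev : ((q' : ℕ) : ℤ) ∣ P.eval ((x : ℕ) : ℤ) - P.eval ((p : ℕ) : ℤ) := by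
          refine (ZMod.intCast_zmod_eq_zero_iff_dvd _ _).mp ?_
          push_cast only [Int.cast_sub]
          rw [sub_eq_zero]
          exact e1
        obtain ⟨t, ht⟩ := hev
        have hxe : P.eval ((x : ℕ) : ℤ) = P.eval ((p : ℕ) : ℤ) + ((q' : ℕ) : ℤ) * t := by
          rw [← ht]; ring
        rw [hxe]
        exact hcq'.add_mul_left_left t
    have hux : IsUnit (((x : ℕ) : ZMod q)) := by
      have h1 := aux_isUnit (Nat.isCoprime_iff_coprime.mpr hxq)
      rwa [Int.cast_natCast] at h1
    refine ⟨hux.unit, ?_⟩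
    rw [IsUnit.unit_spec, ← Int.cast_natCast (R := ZMod q), aux_eval]
    exact aux_isUnit hevx
  · -- p does not divide q : take u = p
    have hcp : Nat.Coprime p q := (Nat.Prime.coprime_iff_not_dvd hp).mpr hpq
    have hu : IsUnit (((p : ℕ) : ZMod q)) := by
      have h1 := aux_isUnit (q := q) (a := (p : ℤ)) (Nat.isCoprime_iff_coprime.mpr hcp)
      have h2 : (((p : ℕ) : ℤ) : ZMod q) = ((p : ℕ) : ZMod q) := by push_cast; rfl
      rwa [h2] at h1
    refine ⟨hu.unit, ?_⟩
    rw [IsUnit.unit_spec]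
    have h2 : (((p : ℕ) : ℤ) : ZMod q) = ((p : ℕ) : ZMod q) := by push_cast; rfl
    rw [← h2, aux_eval]
    exact aux_isUnit hcop

theorem kfree_part_bounded
    (K V : ℕ) (hK : 1 ≤ K) (hV : 1 ≤ V)
    (f : Fin K → ℕ → ℤ) (hf : ∀ i, IsMultFn (f i))
    (W : Fin K → ℕ → Polynomial ℤ)
    (hfW : ∀ (i : Fin K) (v : ℕ), 1 ≤ v → v ≤ V → ∀ p : ℕ, p.Prime →
      f i (p ^ v) = (W i v).eval (p : ℤ))
    (k : ℕ) (hk1 : 1 ≤ k) (hkV : k ≤ V)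
    (hWnc : ∀ i, 0 < (W i k).natDegree) :
    ∃ C : ℕ, ∀ q : ℕ, 0 < q → KAdmissible (fun v => ∏ i, W i v) k q →
      ∀ n : ℕ, 0 < n → Int.gcd (∏ i, f i n) (q : ℤ) = 1 → kfreePart k n ≤ C := by
  classical
  set Wp : ℕ → Polynomial ℤ := fun v => ∏ i, W i v with hWp
  set D : ℕ := Finset.sup (Finset.range k)
    (fun v => (Wp v).natDegree + (Wp v).leadingCoeff.natAbs + 1) with hD
  refine ⟨∏ j ∈ Finset.range (D + 1), (j + 1) ^ k, ?_⟩
  intro q hq hadm n hn hgcd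
  have key : ∀ p ∈ n.primeFactors, n.factorization p < k → p ≤ D := by
    intro p hpmem hvk
    have hpp : p.Prime := Nat.prime_of_mem_primeFactors hpmem
    set v := n.factorization p with hv
    have hv1 : 1 ≤ v :=
      hpp.factorization_pos_of_dvd hn.ne' (Nat.dvd_of_mem_primeFactors hpmem)
    have hcopr : Nat.Coprime (p ^ v) (ordCompl[p] n) :=
      (Nat.coprime_ordCompl hpp hn.ne').pow_left _
    have hsplit : (∏ i, f i n) = (∏ i, f i (p ^ v)) * ∏ i, f i (ordCompl[p] n) := by
      rw [← Finset.prod_mul_distrib]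
      refine Finset.prod_congr rfl fun i _ => ?_
      conv_lhs => rw [← Nat.ordProj_mul_ordCompl_eq_self n p]
      exact (hf i).2 _ _ hcopr
    have hdvd : (∏ i, f i (p ^ v)) ∣ (∏ i, f i n) := ⟨_, hsplit⟩
    have hceval : (∏ i, f i (p ^ v)) = (Wp v).eval (p : ℤ) := by
      rw [hWp, Polynomial.eval_prod]
      exact Finset.prod_congr rfl fun i _ =>
        hfW i v hv1 (le_trans (le_of_lt hvk) hkV) p hpp
    have hcop : IsCoprime ((Wp v).eval (p : ℤ)) (q : ℤ) := by
      rw [← hceval]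
      exact (Int.isCoprime_iff_gcd_eq_one.mpr hgcd).of_isCoprime_of_dvd_left hdvd
    by_cases hW0 : Wp v = 0
    · exfalso
      have hu : IsUnit ((q : ℕ) : ℤ) :=
        isCoprime_zero_left.mp (by rw [hW0] at hcop; simpa using hcop)
      have hq1 : q = 1 := by
        rcases Int.isUnit_iff.mp hu with h | h
        · exact_mod_cast h
        · have h0 : (0 : ℤ) ≤ (q : ℤ) := Int.natCast_nonneg q
          omega
      subst hq1
      refine hadm.2 v hv1 hvk ⟨1, ?_⟩
      rw [Subsingleton.elim (Polynomial.aeval _ _) (1 : ZMod 1)]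
      exact isUnit_one
    · by_contra hDlt
      push_neg at hDlt
      have hgt : (Wp v).natDegree + (Wp v).leadingCoeff.natAbs + 1 < p :=
        lt_of_le_of_lt
          (Finset.le_sup
            (f := fun v => (Wp v).natDegree + (Wp v).leadingCoeff.natAbs + 1)
            (Finset.mem_range.mpr hvk)) hDlt
      obtain ⟨u, hu⟩ := crt_unit q hq.ne' (Wp v) hW0 p hpp hgt hcop
      exact hadm.2 v hv1 hvk ⟨u, hu⟩
  calc kfreePart k n
      = ∏ p ∈ n.primeFactors.filter (fun p => n.factorization p < k),
          p ^ n.factorization p := by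
        rw [kfreePart, Finset.prod_filter]
    _ ≤ ∏ p ∈ n.primeFactors.filter (fun p => n.factorization p < k), (p + 1) ^ k := by
        refine Finset.prod_le_prod (fun i _ => Nat.zero_le _) (fun p hp => ?_)
        have hlt := (Finset.mem_filter.mp hp).2
        calc p ^ n.factorization p
            ≤ (p + 1) ^ n.factorization p := Nat.pow_le_pow_left (Nat.le_succ p) _
          _ ≤ (p + 1) ^ k := Nat.pow_le_pow_right (Nat.succ_pos p) (le_of_lt hlt)
    _ ≤ ∏ j ∈ Finset.range (D + 1), (j + 1) ^ k := by
        refine Finset.prod_le_prod_of_subset_of_one_le' ?_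
          (fun j _ _ => Nat.one_le_pow _ _ (Nat.succ_pos j))
        intro p hp
        rw [Finset.mem_range]
        have h1 := key p (Finset.mem_filter.mp hp).1 (Finset.mem_filter.mp hp).2
        omega
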